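/- Let β ≥ 0, γ > 0, q_e > 0 and p_in > 0 be real numbers. Define R(x) := e^{−2γx} · ( p_in² − (β·q_e²/γ)·(e^{2γx} − 1) ) and p(x) := √(R(x)). Then p(0) = p_in, and for every x with R(x) > 0: p(x) > 0, p is differentiable at x with p'(x) = −β·q_e²/p(x) − γ·p(x), and p'(x) < 0. In particular, together with the constant flux q_e, the pair (p, q_e) is a stationary solution of the isothermal semilinear Euler system: ∂ₓ q = 0 and ∂ₓ p + γ p = −β·q·|q|/p (using q_e|q_e| = q_e² since q_e > 0), and p is strictly decreasing on any interval where R > 0. -/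

import Mathlib

/-- the stationary (steady state) pressure profile
`p(x) = √(e^{−2γx}(p_in² − (βq_e²/γ)(e^{2γx} − 1)))` satisfies `p(0) = p_in`,
is positive where `R > 0`, is differentiable there with
`p' = −βq_e²/p − γp < 0`, together with the constant flux `q_e` it is a
stationary solution (`∂ₓq = 0` and `∂ₓp + γp = −βq|q|/p`), and it is strictly
decreasing on any interval on which `R > 0`. -/
theorem steady_state_solution
    (β γ qe pin : ℝ) (hβ : 0 ≤ β) (hγ : 0 < γ) (hqe : 0 < qe) (hpin : 0 < pin)
    (R p : ℝ → ℝ)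
    (hR : ∀ x, R x = Real.exp (-2 * γ * x) *
      (pin ^ 2 - (β * qe ^ 2 / γ) * (Real.exp (2 * γ * x) - 1)))
    (hp : ∀ x, p x = Real.sqrt (R x)) :
    p 0 = pin ∧
    (∀ x, 0 < R x →
      0 < p x ∧
      HasDerivAt p (-(β * qe ^ 2) / p x - γ * p x) x ∧
      -(β * qe ^ 2) / p x - γ * p x < 0 ∧
      HasDerivAt (fun _ : ℝ => qe) 0 x ∧
      (-(β * qe ^ 2) / p x - γ * p x) + γ * p x = -(β * qe * |qe|) / p x) ∧
    (∀ x y, x < y → (∀ z ∈ Set.Icc x y, 0 < R z) → p y < p x) := by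
  -- derivative of R
  have hRderiv : ∀ x, HasDerivAt R (-2 * γ * R x - 2 * (β * qe ^ 2)) x := by
    intro x
    have h1 : HasDerivAt (fun x : ℝ => Real.exp (-2 * γ * x))
        (Real.exp (-2 * γ * x) * (-2 * γ)) x := by
      have := ((hasDerivAt_id x).const_mul (-2 * γ)).exp
      simpa using this
    have h2 : HasDerivAt (fun x : ℝ => pin ^ 2 - (β * qe ^ 2 / γ) * (Real.exp (2 * γ * x) - 1))
        (-(β * qe ^ 2 / γ) * (Real.exp (2 * γ * x) * (2 * γ))) x := by
      have hexp : HasDerivAt (fun x : ℝ => Real.exp (2 * γ * x))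
          (Real.exp (2 * γ * x) * (2 * γ)) x := by
        have := ((hasDerivAt_id x).const_mul (2 * γ)).exp
        simpa using this
      have := ((hexp.sub_const 1).const_mul (β * qe ^ 2 / γ)).const_sub (pin ^ 2)
      refine this.congr_deriv ?_
      ring
    have hmul := h1.mul h2
    have hfun : R = fun x => Real.exp (-2 * γ * x) *
        (pin ^ 2 - (β * qe ^ 2 / γ) * (Real.exp (2 * γ * x) - 1)) := funext hR
    have hγ' : γ ≠ 0 := ne_of_gt hγ
    have hE : Real.exp (-2 * γ * x) * Real.exp (2 * γ * x) = 1 := by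
      rw [← Real.exp_add]; ring_nf; exact Real.exp_zero
    have hval : -2 * γ * R x - 2 * (β * qe ^ 2) =
        Real.exp (-2 * γ * x) * (-2 * γ) *
          (pin ^ 2 - β * qe ^ 2 / γ * (Real.exp (2 * γ * x) - 1)) +
        Real.exp (-2 * γ * x) * (-(β * qe ^ 2 / γ) * (Real.exp (2 * γ * x) * (2 * γ))) := by
      have hd : γ * (β * qe ^ 2 / γ) = β * qe ^ 2 := by field_simp
      rw [hR]
      linear_combination (2 * (γ * (β * qe ^ 2 / γ))) * hE + 2 * hd
    rw [hval, hfun]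
    exact hmul
  have key : ∀ x, 0 < R x →
      0 < p x ∧ HasDerivAt p (-(β * qe ^ 2) / p x - γ * p x) x := by
    intro x hx
    have hpx : 0 < p x := by rw [hp x]; exact Real.sqrt_pos.mpr hx
    refine ⟨hpx, ?_⟩
    have hsq := (hRderiv x).sqrt (ne_of_gt hx)
    have hfun : p = fun x => Real.sqrt (R x) := funext hp
    rw [hfun]
    convert hsq using 1
    have hpx2 : Real.sqrt (R x) ^ 2 = R x := Real.sq_sqrt hx.le
    have hpx' : 0 < Real.sqrt (R x) := Real.sqrt_pos.mpr hx
    show -(β * qe ^ 2) / Real.sqrt (R x) - γ * Real.sqrt (R x)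
        = (-2 * γ * R x - 2 * (β * qe ^ 2)) / (2 * Real.sqrt (R x))
    field_simp
    linear_combination (-γ) * hpx2
  constructor
  · rw [hp 0, hR 0]
    simp [Real.sqrt_sq hpin.le]
  constructor
  · intro x hx
    obtain ⟨hpx, hder⟩ := key x hx
    refine ⟨hpx, hder, ?_, hasDerivAt_const x qe, ?_⟩
    · have h1 : -(β * qe ^ 2) / p x ≤ 0 := by
        apply div_nonpos_of_nonpos_of_nonneg
        · nlinarith
        · exact hpx.le
      nlinarith
    · rw [abs_of_pos hqe]; ring
  · intro x y hxy hall
    have hconv : Convex ℝ (Set.Icc x y) := convex_Icc x y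
    have hcont : ContinuousOn p (Set.Icc x y) := by
      have : Continuous p := by
        have hfun : p = fun x => Real.sqrt (Real.exp (-2 * γ * x) *
            (pin ^ 2 - (β * qe ^ 2 / γ) * (Real.exp (2 * γ * x) - 1))) := by
          funext z; rw [hp z, hR z]
        rw [hfun]; fun_prop
      exact this.continuousOn
    have hderneg : ∀ z ∈ interior (Set.Icc x y), deriv p z < 0 := by
      intro z hz
      rw [interior_Icc] at hz
      have hzIcc : z ∈ Set.Icc x y := Set.mem_Icc.mpr ⟨hz.1.le, hz.2.le⟩
      obtain ⟨hpz, hder⟩ := key z (hall z hzIcc)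
      rw [hder.deriv]
      have h1 : -(β * qe ^ 2) / p z ≤ 0 := by
        apply div_nonpos_of_nonpos_of_nonneg
        · nlinarith
        · exact hpz.le
      nlinarith
    exact strictAntiOn_of_deriv_neg hconv hcont hderneg
      (Set.left_mem_Icc.mpr hxy.le) (Set.right_mem_Icc.mpr hxy.le) hxy
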